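/- If z < m(p) and Δ_μ(p,z) = 0, then f(q) = φ(q)/(u(p,q) − z) is a nonzero element of L²(𝕋³) satisfying h_μ(p)f = z·f, and every eigenfunction of h_μ(p) with eigenvalue z is a scalar multiple of f (the eigenvalue is simple). -/

import Mathlib

open Real MeasureTheory

noncomputable def eps (p : Fin 3 → ℝ) : ℝ := 3 - Real.cos (p 0) - Real.cos (p 1) - Real.cos (p 2)

noncomputable def uu (p q : Fin 3 → ℝ) : ℝ := eps p + eps (p - q) + eps q

/-- The torus `𝕋³`, identified with the cube `(-π, π]³`. -/
def T3 : Set (Fin 3 → ℝ) := Set.univ.pi fun _ => Set.Ioc (-Real.pi) Real.pi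

/-- `m(p) = min_{q ∈ 𝕋³} u(p,q)`, the bottom of the essential spectrum. -/
noncomputable def mfun (p : Fin 3 → ℝ) : ℝ := sInf (uu p '' T3)

/-- The Fredholm determinant `Δ_μ(p,z) = 1 - μ ∫_{𝕋³} φ(t)²/(u(p,t) - z) dt`. -/
noncomputable def Δ (μ : ℝ) (φ : (Fin 3 → ℝ) → ℝ) (p : Fin 3 → ℝ) (z : ℝ) : ℝ :=
  1 - μ * ∫ t in T3, φ t ^ 2 / (uu p t - z)

lemma eps_nonneg (p : Fin 3 → ℝ) : 0 ≤ eps p := by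
  have := Real.cos_le_one (p 0); have := Real.cos_le_one (p 1); have := Real.cos_le_one (p 2)
  unfold eps; linarith

lemma uu_nonneg (p q : Fin 3 → ℝ) : 0 ≤ uu p q := by
  have := eps_nonneg p; have := eps_nonneg (p - q); have := eps_nonneg q
  unfold uu; linarith

lemma mfun_le (p : Fin 3 → ℝ) {q : Fin 3 → ℝ} (hq : q ∈ T3) : mfun p ≤ uu p q :=
  csInf_le ⟨0, by rintro x ⟨t, _, rfl⟩; exact uu_nonneg p t⟩ ⟨q, hq, rfl⟩

lemma T3_meas : MeasurableSet T3 :=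
  MeasurableSet.univ_pi fun _ => measurableSet_Ioc

lemma uu_cont (p : Fin 3 → ℝ) : Continuous (fun q => uu p q) := by
  unfold uu eps
  fun_prop

lemma T3_vol : volume T3 < ⊤ := by
  rw [T3, MeasureTheory.volume_pi_pi]
  simp [Real.volume_Ioc]

/-- If `z < m(p)` and `Δ_μ(p,z) = 0`, then `f(q) = φ(q)/(u(p,q) - z)` is a nonzero
element of `L²(𝕋³)` satisfying `h_μ(p) f = z f`, and the eigenvalue `z` is simple:
every eigenfunction is an (a.e.) scalar multiple of `f`. -/
theorem stmt9 (φ : (Fin 3 → ℝ) → ℝ) (hφ : Continuous φ)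
    (μ : ℝ) (hμ : 0 < μ) (p : Fin 3 → ℝ) (hp : p ∈ T3)
    (z : ℝ) (hz : z < mfun p) (hΔ : Δ μ φ p z = 0) :
    MemLp (fun q => φ q / (uu p q - z)) 2 (volume.restrict T3) ∧
    ¬ (∀ᵐ q ∂(volume.restrict T3), φ q / (uu p q - z) = 0) ∧
    (∀ q ∈ T3,
      uu p q * (φ q / (uu p q - z)) - μ * φ q * (∫ t in T3, φ t * (φ t / (uu p t - z)))
        = z * (φ q / (uu p q - z))) ∧
    (∀ g : (Fin 3 → ℝ) → ℝ, MemLp g 2 (volume.restrict T3) →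
      (∀ᵐ q ∂(volume.restrict T3),
        uu p q * g q - μ * φ q * ∫ t in T3, φ t * g t = z * g q) →
      ∃ c : ℝ, ∀ᵐ q ∂(volume.restrict T3), g q = c * (φ q / (uu p q - z))) := by
  haveI : IsFiniteMeasure (volume.restrict T3) :=
    ⟨by rw [Measure.restrict_apply_univ]; exact T3_vol⟩
  set δ := mfun p - z with hδdef
  have hδ : 0 < δ := by simp [hδdef]; linarith
  have hden : ∀ q ∈ T3, δ ≤ uu p q - z := fun q hq => by
    have := mfun_le p hq; simp [hδdef]; linarith
  have hdpos : ∀ q ∈ T3, 0 < uu p q - z := fun q hq => lt_of_lt_of_le hδ (hden q hq)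
  -- bound for φ
  have hK : IsCompact (Set.Icc (fun _ => -π) (fun _ => π) : Set (Fin 3 → ℝ)) := isCompact_Icc
  obtain ⟨M, hM⟩ := hK.exists_bound_of_continuousOn hφ.continuousOn
  have hT3K : T3 ⊆ Set.Icc (fun _ => -π) (fun _ => π) := by
    intro q hq
    constructor <;> intro i <;> have := hq i (Set.mem_univ i)
    · exact le_of_lt this.1
    · exact this.2
  have hM0 : 0 ≤ M := le_trans (norm_nonneg _) (hM (fun _ => 0) (by
      constructor <;> intro i <;> simp [Real.pi_nonneg, neg_nonpos.mpr Real.pi_nonneg]))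
  have hMq : ∀ q ∈ T3, |φ q| ≤ M := fun q hq => hM q (hT3K hq)
  -- measurability
  have hfmeas : Measurable (fun q => φ q / (uu p q - z)) :=
    hφ.measurable.div ((uu_cont p).measurable.sub measurable_const)
  -- Memℒp
  have hmem : MemLp (fun q => φ q / (uu p q - z)) 2 (volume.restrict T3) := by
    apply MemLp.of_bound hfmeas.aestronglyMeasurable (M / δ)
    filter_upwards [ae_restrict_mem T3_meas] with q hq
    rw [Real.norm_eq_abs, abs_div, abs_of_pos (hdpos q hq)]
    exact div_le_div₀ hM0 (hMq q hq) hδ (hden q hq)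
  -- integral identity from Δ = 0
  have hI : μ * ∫ t in T3, φ t ^ 2 / (uu p t - z) = 1 := by
    have : Δ μ φ p z = 1 - μ * ∫ t in T3, φ t ^ 2 / (uu p t - z) := rfl
    rw [this] at hΔ; linarith
  have hIeq : (∫ t in T3, φ t * (φ t / (uu p t - z)))
      = ∫ t in T3, φ t ^ 2 / (uu p t - z) := by
    congr 1; funext t; ring
  -- nonzero
  have hnz : ¬ (∀ᵐ q ∂(volume.restrict T3), φ q / (uu p q - z) = 0) := by
    intro h
    have h0 : (∫ t in T3, φ t ^ 2 / (uu p t - z)) = 0 := by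
      apply integral_eq_zero_of_ae
      filter_upwards [h] with t ht
      have : φ t ^ 2 / (uu p t - z) = φ t * (φ t / (uu p t - z)) := by ring
      simp [this, ht]
    rw [h0, mul_zero] at hI
    exact one_ne_zero hI.symm
  refine ⟨hmem, hnz, ?_, ?_⟩
  · intro q hq
    have hd : uu p q - z ≠ 0 := ne_of_gt (hdpos q hq)
    rw [hIeq]
    have : μ * φ q * (∫ t in T3, φ t ^ 2 / (uu p t - z)) = φ q := by
      rw [mul_comm μ (φ q), mul_assoc, hI, mul_one]
    rw [this]
    field_simp
    ring
  · intro g _ hae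
    refine ⟨μ * ∫ t in T3, φ t * g t, ?_⟩
    filter_upwards [hae, ae_restrict_mem T3_meas] with q hq hqT
    have hd : uu p q - z ≠ 0 := ne_of_gt (hdpos q hqT)
    field_simp
    linarith [hq]
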